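/- In the algebra H(-1) = ℍ ⊕ ℍc with c central and c² = -1 (biquaternions), an element w + c with w ∈ ℍ generates a proper left ideal ℍ(w+c) if and only if w is a purely imaginary unit quaternion (w² = -1); hence the set of proper left ideals is parametrized by the unit 2-sphere of imaginary quaternions, and H(-1) has no nontrivial two-sided ideals. -/

import Mathlib

/-- The defining relations of the algebra `H(ε) = ⟨i, j, c | i² = j² = -1, ij + ji = 0,
ic = ci, jc = cj, c² = ε⟩` (generators indexed `0 = i`, `1 = j`, `2 = c`). -/
inductive BRel (ε : ℝ) : FreeAlgebra ℝ (Fin 3) → FreeAlgebra ℝ (Fin 3) → Prop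
  | isq : BRel ε (FreeAlgebra.ι ℝ 0 * FreeAlgebra.ι ℝ 0) (-1)
  | jsq : BRel ε (FreeAlgebra.ι ℝ 1 * FreeAlgebra.ι ℝ 1) (-1)
  | anti : BRel ε (FreeAlgebra.ι ℝ 0 * FreeAlgebra.ι ℝ 1 + FreeAlgebra.ι ℝ 1 * FreeAlgebra.ι ℝ 0) 0
  | ic : BRel ε (FreeAlgebra.ι ℝ 0 * FreeAlgebra.ι ℝ 2) (FreeAlgebra.ι ℝ 2 * FreeAlgebra.ι ℝ 0)
  | jc : BRel ε (FreeAlgebra.ι ℝ 1 * FreeAlgebra.ι ℝ 2) (FreeAlgebra.ι ℝ 2 * FreeAlgebra.ι ℝ 1)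
  | csq : BRel ε (FreeAlgebra.ι ℝ 2 * FreeAlgebra.ι ℝ 2) (algebraMap ℝ (FreeAlgebra ℝ (Fin 3)) ε)

/-- The algebra `H(ε) = ℍ ⊕ ℍc`. -/
abbrev BAlg (ε : ℝ) : Type := RingQuot (BRel ε)

/-- The generators `i, j, c` of `H(ε)`. -/
noncomputable def gB (ε : ℝ) (k : Fin 3) : BAlg ε :=
  RingQuot.mkAlgHom ℝ (BRel ε) (FreeAlgebra.ι ℝ k)

/-- The quaternion subalgebra `ℍ ⊆ H(ε)`, generated by `i` and `j`. -/
noncomputable def quatSub (ε : ℝ) : Subalgebra ℝ (BAlg ε) :=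
  Algebra.adjoin ℝ ({gB ε 0, gB ε 1} : Set (BAlg ε))

noncomputable section
open Quaternion Matrix

abbrev M2 : Type := Matrix (Fin 2) (Fin 2) ℂ

def fM : Fin 3 → M2 := ![!![Complex.I, 0; 0, -Complex.I], !![0, 1; -1, 0], !![Complex.I, 0; 0, Complex.I]]

-- relation lemmas in BAlg
lemma brel_eq {x y : FreeAlgebra ℝ (Fin 3)} (h : BRel (-1) x y) :
    RingQuot.mkAlgHom ℝ (BRel (-1)) x = RingQuot.mkAlgHom ℝ (BRel (-1)) y :=
  RingQuot.mkAlgHom_rel ℝ h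

lemma g_isq : gB (-1) 0 * gB (-1) 0 = -1 := by
  have := brel_eq BRel.isq
  simpa [gB, _root_.map_mul, _root_.map_neg, _root_.map_one] using this

lemma g_jsq : gB (-1) 1 * gB (-1) 1 = -1 := by
  have := brel_eq BRel.jsq
  simpa [gB, _root_.map_mul, _root_.map_neg, _root_.map_one] using this

lemma g_anti : gB (-1) 0 * gB (-1) 1 + gB (-1) 1 * gB (-1) 0 = 0 := by
  have := brel_eq BRel.anti
  simpa [gB, _root_.map_mul, _root_.map_add] using this

lemma g_ic : gB (-1) 0 * gB (-1) 2 = gB (-1) 2 * gB (-1) 0 := by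
  have := brel_eq BRel.ic
  simpa [gB, _root_.map_mul] using this

lemma g_jc : gB (-1) 1 * gB (-1) 2 = gB (-1) 2 * gB (-1) 1 := by
  have := brel_eq BRel.jc
  simpa [gB, _root_.map_mul] using this

lemma g_csq : gB (-1) 2 * gB (-1) 2 = -1 := by
  have := brel_eq BRel.csq
  have h2 : (RingQuot.mkAlgHom ℝ (BRel (-1))) (algebraMap ℝ (FreeAlgebra ℝ (Fin 3)) (-1)) = -1 := by
    rw [AlgHom.commutes]; simp
  simpa [gB, _root_.map_mul, h2] using this

-- the representation φ
def φ : BAlg (-1) →ₐ[ℝ] M2 :=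
  RingQuot.liftAlgHom ℝ ⟨FreeAlgebra.lift ℝ fM, by
    rintro x y ⟨⟩ <;>
      simp [fM, Matrix.mul_fin_two, Matrix.one_fin_two, Algebra.algebraMap_eq_smul_one,
        Matrix.smul_of] <;>
      ext i j <;> fin_cases i <;> fin_cases j <;>
      simp [Complex.ext_iff] <;> ring_nf <;> simp⟩

lemma φ_g (k : Fin 3) : φ (gB (-1) k) = fM k := by
  rw [gB, φ, RingQuot.liftAlgHom_mkAlgHom_apply, FreeAlgebra.lift_ι_apply]

abbrev cB : BAlg (-1) := gB (-1) 2

lemma adjoin_gB : Algebra.adjoin ℝ (Set.range (gB (-1))) = ⊤ := by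
  have : Set.range (gB (-1)) =
      (RingQuot.mkAlgHom ℝ (BRel (-1))) '' (Set.range (FreeAlgebra.ι ℝ)) := by
    rw [← Set.range_comp]; rfl
  rw [this, ← AlgHom.map_adjoin, FreeAlgebra.adjoin_range_ι, Algebra.map_top,
    AlgHom.range_eq_top]
  exact RingQuot.mkAlgHom_surjective ℝ _

lemma c_central (x : BAlg (-1)) : cB * x = x * cB := by
  have hx : x ∈ Subalgebra.centralizer ℝ ({cB} : Set (BAlg (-1))) := by
    have hle : Algebra.adjoin ℝ (Set.range (gB (-1))) ≤
        Subalgebra.centralizer ℝ ({cB} : Set (BAlg (-1))) := by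
      apply Algebra.adjoin_le
      rintro _ ⟨k, rfl⟩
      rw [SetLike.mem_coe, Subalgebra.mem_centralizer_iff]
      rintro g rfl
      fin_cases k
      · exact g_ic.symm
      · exact g_jc.symm
      · rfl
    exact hle (by rw [adjoin_gB]; trivial)
  rw [Subalgebra.mem_centralizer_iff] at hx
  exact hx cB rfl

lemma g_ji : gB (-1) 1 * gB (-1) 0 = -(gB (-1) 0 * gB (-1) 1) := by
  have := g_anti; linear_combination (norm := noncomm_ring) this

def qB : QuaternionAlgebra.Basis (BAlg (-1)) (-1 : ℝ) (0 : ℝ) (-1 : ℝ) where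
  i := gB (-1) 0
  j := gB (-1) 1
  k := gB (-1) 0 * gB (-1) 1
  i_mul_i := by rw [g_isq]; module
  j_mul_j := by rw [g_jsq]; module
  i_mul_j := rfl
  j_mul_i := by rw [g_ji, zero_smul, zero_sub]

def ψ : ℍ[ℝ] →ₐ[ℝ] BAlg (-1) := qB.liftHom

lemma ψ_apply (r : ℍ[ℝ]) : ψ r = algebraMap ℝ _ r.re + r.imI • gB (-1) 0 +
    r.imJ • gB (-1) 1 + r.imK • (gB (-1) 0 * gB (-1) 1) := by
  simp only [ψ, QuaternionAlgebra.Basis.liftHom_apply]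
  rfl

lemma ψ_i : ψ ⟨0,1,0,0⟩ = gB (-1) 0 := (ψ_apply _).trans (by simp)
lemma ψ_j : ψ ⟨0,0,1,0⟩ = gB (-1) 1 := (ψ_apply _).trans (by simp)

def Mi : M2 := !![Complex.I, 0; 0, -Complex.I]
def Mj : M2 := !![0, 1; -1, 0]
def Mc : M2 := !![Complex.I, 0; 0, Complex.I]

lemma φψ (r : ℍ[ℝ]) : φ (ψ r) =
    !![⟨r.re, r.imI⟩, ⟨r.imJ, r.imK⟩; ⟨-r.imJ, r.imK⟩, ⟨r.re, -r.imI⟩] := by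
  rw [ψ_apply]
  simp only [_root_.map_add, _root_.map_smul, AlgHom.commutes, _root_.map_mul, φ_g]
  show _ = Matrix.of _
  ext i j
  fin_cases i <;> fin_cases j <;>
    simp [fM, Matrix.mul_apply, Fin.sum_univ_two, Matrix.algebraMap_matrix_apply,
      Complex.ext_iff, Matrix.one_apply] <;> ring_nf <;> simp

lemma cB_sq : cB * cB = -1 := g_csq

lemma c_swap (x : BAlg (-1)) : cB * x = x * cB := c_central x

lemma mul_form (p q p' q' : ℍ[ℝ]) :
    (ψ p + ψ q * cB) * (ψ p' + ψ q' * cB) =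
      ψ (p * p' - q * q') + ψ (p * q' + q * p') * cB := by
  have h1 : ψ q * cB * ψ p' = ψ q * ψ p' * cB := by
    rw [mul_assoc, c_swap (ψ p'), ← mul_assoc]
  have h2 : ψ q * cB * (ψ q' * cB) = -(ψ q * ψ q') := by
    have : cB * (ψ q' * cB) = ψ q' * (cB * cB) := by
      rw [← mul_assoc, c_swap (ψ q'), mul_assoc]
    rw [mul_assoc, this, cB_sq, ← mul_assoc]
    exact mul_neg_one (ψ q * ψ q')
  rw [add_mul, mul_add, mul_add, h1, h2, map_sub, _root_.map_add, _root_.map_mul,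
    _root_.map_mul, _root_.map_mul, _root_.map_mul, add_mul, sub_eq_add_neg]
  noncomm_ring

lemma decomp (x : BAlg (-1)) : ∃ p q : ℍ[ℝ], x = ψ p + ψ q * cB := by
  have hx : x ∈ Algebra.adjoin ℝ (Set.range (gB (-1))) := by rw [adjoin_gB]; trivial
  induction hx using Algebra.adjoin_induction with
  | mem y hy =>
    obtain ⟨k, rfl⟩ := hy
    fin_cases k
    · exact ⟨⟨0,1,0,0⟩, 0, by simp [ψ_i]⟩
    · exact ⟨⟨0,0,1,0⟩, 0, by simp [ψ_j]⟩
    · exact ⟨0, 1, by simp⟩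
  | algebraMap r => exact ⟨algebraMap ℝ _ r, 0, by rw [_root_.map_zero, zero_mul, add_zero, ψ.commutes]⟩
  | add y z hy hz ihy ihz =>
    obtain ⟨p, q, rfl⟩ := ihy
    obtain ⟨p', q', rfl⟩ := ihz
    exact ⟨p + p', q + q', by rw [_root_.map_add, _root_.map_add, add_mul]; abel⟩
  | mul y z hy hz ihy ihz =>
    obtain ⟨p, q, rfl⟩ := ihy
    obtain ⟨p', q', rfl⟩ := ihz
    exact ⟨p * p' - q * q', p * q' + q * p', mul_form p q p' q'⟩

lemma decomp_unique {p q : ℍ[ℝ]} (h : ψ p + ψ q * cB = 0) : p = 0 ∧ q = 0 := by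
  have h2 := congrArg φ h
  rw [_root_.map_add, _root_.map_mul, φψ, φψ, map_zero] at h2
  have hc : φ cB = !![Complex.I, 0; 0, Complex.I] := φ_g 2
  rw [hc] at h2
  have e00 := congrFun (congrFun h2 0) 0
  have e01 := congrFun (congrFun h2 0) 1
  have e10 := congrFun (congrFun h2 1) 0
  have e11 := congrFun (congrFun h2 1) 1
  simp [Matrix.mul_apply, Fin.sum_univ_two, Complex.ext_iff] at e00 e01 e10 e11
  constructor <;>
    (ext <;> simp <;>
      linarith [e00.1, e00.2, e01.1, e01.2, e10.1, e10.2, e11.1, e11.2])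

lemma decomp_unique₂ {p q p' q' : ℍ[ℝ]} (h : ψ p + ψ q * cB = ψ p' + ψ q' * cB) :
    p = p' ∧ q = q' := by
  have h0 : ψ (p - p') + ψ (q - q') * cB = 0 := by
    rw [map_sub, map_sub, sub_mul]
    rw [sub_add_sub_comm, h, sub_self]
  obtain ⟨h1, h2⟩ := decomp_unique h0
  exact ⟨sub_eq_zero.1 h1, sub_eq_zero.1 h2⟩

lemma ψ_inj : Function.Injective ψ := by
  intro a b h
  have : ψ a + ψ 0 * cB = ψ b + ψ 0 * cB := by rw [h]
  exact (decomp_unique₂ this).1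

lemma ψ_mem_quatSub (s : ℍ[ℝ]) : ψ s ∈ quatSub (-1) := by
  rw [ψ_apply]
  have h0 : gB (-1) 0 ∈ quatSub (-1) := Algebra.subset_adjoin (by simp)
  have h1 : gB (-1) 1 ∈ quatSub (-1) := Algebra.subset_adjoin (by simp)
  exact Subalgebra.add_mem _ (Subalgebra.add_mem _ (Subalgebra.add_mem _
    (Subalgebra.algebraMap_mem _ _) (Subalgebra.smul_mem _ h0 _))
    (Subalgebra.smul_mem _ h1 _)) (Subalgebra.smul_mem _ (Subalgebra.mul_mem _ h0 h1) _)

lemma quatSub_eq_range {w : BAlg (-1)} (hw : w ∈ quatSub (-1)) : ∃ s : ℍ[ℝ], ψ s = w := by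
  induction hw using Algebra.adjoin_induction with
  | mem y hy =>
    rcases hy with rfl | rfl
    · exact ⟨⟨0,1,0,0⟩, ψ_i⟩
    · exact ⟨⟨0,0,1,0⟩, ψ_j⟩
  | algebraMap r => exact ⟨algebraMap ℝ _ r, ψ.commutes r⟩
  | add y z hy hz ihy ihz =>
    obtain ⟨a, rfl⟩ := ihy; obtain ⟨b, rfl⟩ := ihz; exact ⟨a + b, _root_.map_add ψ a b⟩
  | mul y z hy hz ihy ihz =>
    obtain ⟨a, rfl⟩ := ihy; obtain ⟨b, rfl⟩ := ihz; exact ⟨a * b, _root_.map_mul ψ a b⟩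

lemma mem_span_v {v x : BAlg (-1)} : x ∈ Ideal.span ({v} : Set (BAlg (-1))) ↔ ∃ a, a * v = x := by
  rw [← Ideal.submodule_span_eq, Submodule.mem_span_singleton]
  simp only [smul_eq_mul]

lemma v_eq (s : ℍ[ℝ]) : ψ s + cB = ψ s + ψ 1 * cB := by rw [_root_.map_one, one_mul]

lemma left_inv_of {s : ℍ[ℝ]} (hs : s * s ≠ -1) : ∃ x, x * (ψ s + cB) = 1 := by
  set u : ℍ[ℝ] := s * s + 1 with hu_def
  have hu : u ≠ 0 := by
    intro h; rw [hu_def] at h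
    exact hs (eq_neg_of_add_eq_zero_left h)
  refine ⟨ψ (u⁻¹ * s) + ψ (-u⁻¹) * cB, ?_⟩
  rw [v_eq, mul_form]
  have key : u⁻¹ * (s * s) + u⁻¹ = u⁻¹ * u := by rw [hu_def, mul_add, mul_one]
  have h1 : u⁻¹ * s * s - -u⁻¹ * 1 = 1 := by
    rw [mul_one, mul_assoc, sub_neg_eq_add, key, inv_mul_cancel₀ hu]
  have h2 : u⁻¹ * s * 1 + -u⁻¹ * s = 0 := by
    rw [mul_one, neg_mul]; exact add_neg_cancel _
  rw [h1, h2, _root_.map_one, _root_.map_zero, zero_mul, add_zero]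

lemma span_ne_top_of {s : ℍ[ℝ]} (hs : s * s = -1) :
    Ideal.span ({ψ s + cB} : Set (BAlg (-1))) ≠ ⊤ := by
  intro h
  have h1 : (1 : BAlg (-1)) ∈ Ideal.span ({ψ s + cB} : Set (BAlg (-1))) := by
    rw [h]; trivial
  obtain ⟨a, ha⟩ := mem_span_v.1 h1
  obtain ⟨p, q, rfl⟩ := decomp a
  rw [v_eq, mul_form] at ha
  have h2 : (1 : BAlg (-1)) = ψ 1 + ψ 0 * cB := by
    rw [_root_.map_one, _root_.map_zero, zero_mul, add_zero]
  rw [h2] at ha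
  obtain ⟨e1, e2⟩ := decomp_unique₂ ha
  rw [mul_one] at e2
  have hp : p = -(q * s) := eq_neg_of_add_eq_zero_left e2
  rw [hp, mul_one, neg_mul, mul_assoc, hs] at e1
  simp at e1

lemma span_ne_bot_of (s : ℍ[ℝ]) :
    Ideal.span ({ψ s + cB} : Set (BAlg (-1))) ≠ ⊥ := by
  intro h
  have hv : (ψ s + cB) ∈ Ideal.span ({ψ s + cB} : Set (BAlg (-1))) :=
    Ideal.subset_span rfl
  rw [h, Submodule.mem_bot, v_eq] at hv
  exact one_ne_zero (decomp_unique hv).2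

lemma span_proper_iff (s : ℍ[ℝ]) :
    (Ideal.span ({ψ s + cB} : Set (BAlg (-1))) ≠ ⊥ ∧
      Ideal.span ({ψ s + cB} : Set (BAlg (-1))) ≠ ⊤) ↔ s * s = -1 := by
  constructor
  · rintro ⟨-, htop⟩
    by_contra hs
    obtain ⟨x, hx⟩ := left_inv_of hs
    apply htop
    rw [Ideal.eq_top_iff_one, ← hx]
    exact Ideal.mul_mem_left _ x (Ideal.subset_span rfl)
  · intro hs
    exact ⟨span_ne_bot_of s, span_ne_top_of hs⟩

lemma top_of_psi_mem {d : ℍ[ℝ]} (hd : d ≠ 0) {I : Ideal (BAlg (-1))}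
    (h : ψ d ∈ I) : I = ⊤ := by
  rw [Ideal.eq_top_iff_one]
  have : ψ d⁻¹ * ψ d ∈ I := Ideal.mul_mem_left _ _ h
  rwa [← _root_.map_mul, inv_mul_cancel₀ hd, _root_.map_one] at this

lemma classify (I : Ideal (BAlg (-1))) (hb : I ≠ ⊥) (ht : I ≠ ⊤) :
    ∃ s : ℍ[ℝ], s * s = -1 ∧ I = Ideal.span ({ψ s + cB} : Set (BAlg (-1))) := by
  obtain ⟨x, hxI, hx0⟩ := Submodule.exists_mem_ne_zero_of_ne_bot hb
  obtain ⟨p, q, rfl⟩ := decomp x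
  by_cases hq : q = 0
  · exfalso
    rw [hq, _root_.map_zero, zero_mul, add_zero] at hxI hx0
    exact ht (top_of_psi_mem (fun h => hx0 (by rw [h, _root_.map_zero])) hxI)
  · set s : ℍ[ℝ] := q⁻¹ * p with hs_def
    have hx' : ψ (q⁻¹) * (ψ p + ψ q * cB) = ψ s + cB := by
      rw [mul_add, ← mul_assoc, ← _root_.map_mul, ← _root_.map_mul,
        inv_mul_cancel₀ hq, _root_.map_one, one_mul, hs_def]
    have hvI : ψ s + cB ∈ I := by
      rw [← hx']; exact Ideal.mul_mem_left _ _ hxI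
    have hss : s * s = -1 := by
      by_contra hss
      obtain ⟨a, ha⟩ := left_inv_of hss
      refine ht ((Ideal.eq_top_iff_one _).2 ?_)
      rw [← ha]; exact Ideal.mul_mem_left _ a hvI
    refine ⟨s, hss, le_antisymm ?_ ?_⟩
    · intro y hyI
      obtain ⟨p', q', rfl⟩ := decomp y
      have hz : ψ (p' - q' * s) ∈ I := by
        have h1 : ψ q' * (ψ s + cB) ∈ I := Ideal.mul_mem_left _ _ hvI
        have h2 : ψ p' + ψ q' * cB - ψ q' * (ψ s + cB) = ψ (p' - q' * s) := by
          rw [mul_add (ψ q') (ψ s) cB, ← _root_.map_mul ψ q' s, map_sub ψ p' (q' * s)]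
          abel
        rw [← h2]; exact sub_mem hyI h1
      by_cases hd : p' - q' * s = 0
      · have hp' : p' = q' * s := by rwa [sub_eq_zero] at hd
        rw [mem_span_v]
        exact ⟨ψ q', by rw [mul_add (ψ q') (ψ s) cB, ← _root_.map_mul ψ q' s, hp']⟩
      · exact absurd (top_of_psi_mem hd hz) ht
    · rw [Ideal.span_le, Set.singleton_subset_iff]
      exact hvI

lemma eq_of_span_eq {s₁ s₂ : ℍ[ℝ]} (h₂ : s₂ * s₂ = -1)
    (hspan : Ideal.span ({ψ s₁ + cB} : Set (BAlg (-1))) =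
      Ideal.span ({ψ s₂ + cB} : Set (BAlg (-1)))) : s₁ = s₂ := by
  have hv : (ψ s₁ + cB) ∈ Ideal.span ({ψ s₂ + cB} : Set (BAlg (-1))) := by
    rw [← hspan]; exact Ideal.subset_span rfl
  obtain ⟨a, ha⟩ := mem_span_v.1 hv
  obtain ⟨p, q, rfl⟩ := decomp a
  rw [v_eq s₂, mul_form, v_eq s₁] at ha
  obtain ⟨e1, e2⟩ := decomp_unique₂ ha
  rw [mul_one] at e2
  have hp : p = 1 - q * s₂ := by rw [← e2]; abel
  rw [hp, mul_one, sub_mul, one_mul, mul_assoc, h₂] at e1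
  rw [← e1]; simp

lemma exists_noncomm {s : ℍ[ℝ]} (hs : s * s = -1) : ∃ t : ℍ[ℝ], t * s - s * t ≠ 0 := by
  by_contra hcon
  push_neg at hcon
  have hi := sub_eq_zero.1 (hcon ⟨0,1,0,0⟩)
  have hj := sub_eq_zero.1 (hcon ⟨0,0,1,0⟩)
  replace hi := QuaternionAlgebra.ext_iff.1 hi
  replace hj := QuaternionAlgebra.ext_iff.1 hj
  obtain ⟨hi1, hi2, hi3, hi4⟩ := hi
  obtain ⟨hj1, hj2, hj3, hj4⟩ := hj
  erw [QuaternionAlgebra.imJ_mul, QuaternionAlgebra.imJ_mul] at hi3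
  erw [QuaternionAlgebra.imK_mul, QuaternionAlgebra.imK_mul] at hi4
  erw [QuaternionAlgebra.imI_mul, QuaternionAlgebra.imI_mul] at hj2
  erw [QuaternionAlgebra.imK_mul, QuaternionAlgebra.imK_mul] at hj4
  simp at hi3 hi4 hj2 hj4
  have hre := congrArg QuaternionAlgebra.re hs
  simp [QuaternionAlgebra.re_mul] at hre
  nlinarith [sq_nonneg s.re, sq_nonneg s.imI, sq_nonneg s.imJ, sq_nonneg s.imK,
    hi3, hi4, hj2, hj4, hre]

lemma psi_sq_neg_one {s : ℍ[ℝ]} : ψ s * ψ s = -1 ↔ s * s = -1 := by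
  constructor
  · intro h
    apply ψ_inj
    rw [_root_.map_mul, _root_.map_neg, _root_.map_one, h]
  · intro h
    rw [← _root_.map_mul, h, _root_.map_neg, _root_.map_one]

lemma two_sided (I : Ideal (BAlg (-1))) (hr : ∀ x ∈ I, ∀ a : BAlg (-1), x * a ∈ I) :
    I = ⊥ ∨ I = ⊤ := by
  by_contra hcon
  push_neg at hcon
  obtain ⟨hb, ht⟩ := hcon
  obtain ⟨s, hss, hI⟩ := classify I hb ht
  have hv : ψ s + cB ∈ I := by rw [hI]; exact Ideal.subset_span rfl
  obtain ⟨t, hts⟩ := exists_noncomm hss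
  have key : ψ t * (ψ s + cB) - (ψ s + cB) * ψ t = ψ (t * s - s * t) := by
    have h1 : ψ t * (ψ s + cB) = ψ (t * s) + ψ t * cB := by
      rw [mul_add (ψ t) (ψ s) cB, ← _root_.map_mul ψ t s]
    have h2 : (ψ s + cB) * ψ t = ψ (s * t) + ψ t * cB := by
      rw [add_mul (ψ s) cB (ψ t), ← _root_.map_mul ψ s t, ← c_swap (ψ t)]
    rw [h1, h2, map_sub ψ (t * s) (s * t)]
    abel
  have hmem : ψ (t * s - s * t) ∈ I := by
    rw [← key]
    exact sub_mem (Ideal.mul_mem_left _ _ hv) (hr _ hv (ψ t))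
  exact ht (top_of_psi_mem hts hmem)

end

/-- In the biquaternions `H(-1) = ℍ ⊕ ℍc` (`c` central, `c² = -1`), for
`w ∈ ℍ` the left ideal generated by `w + c` is proper (nonzero and not everything) iff
`w² = -1`; every proper nonzero left ideal is of this form for a unique such `w` (so the
proper left ideals are parametrized by the 2-sphere of imaginary unit quaternions); and
`H(-1)` has no nontrivial two-sided ideals. -/
theorem stmt_14 :
    (∀ w ∈ quatSub (-1),
        (Ideal.span ({w + gB (-1) 2} : Set (BAlg (-1))) ≠ ⊥ ∧
            Ideal.span ({w + gB (-1) 2} : Set (BAlg (-1))) ≠ ⊤) ↔ w * w = -1) ∧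
    (∀ I : Ideal (BAlg (-1)), I ≠ ⊥ → I ≠ ⊤ →
        ∃ w ∈ quatSub (-1), w * w = -1 ∧
          I = Ideal.span ({w + gB (-1) 2} : Set (BAlg (-1)))) ∧
    (∀ w₁ ∈ quatSub (-1), ∀ w₂ ∈ quatSub (-1), w₁ * w₁ = -1 → w₂ * w₂ = -1 →
        Ideal.span ({w₁ + gB (-1) 2} : Set (BAlg (-1))) =
            Ideal.span ({w₂ + gB (-1) 2} : Set (BAlg (-1))) → w₁ = w₂) ∧
    (∀ I : Ideal (BAlg (-1)), (∀ x ∈ I, ∀ a : BAlg (-1), x * a ∈ I) →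
        I = ⊥ ∨ I = ⊤) := by
  refine ⟨?_, ?_, ?_, two_sided⟩
  · intro w hw
    obtain ⟨s, rfl⟩ := quatSub_eq_range hw
    rw [psi_sq_neg_one]
    exact span_proper_iff s
  · intro I hb ht
    obtain ⟨s, hss, hI⟩ := classify I hb ht
    exact ⟨ψ s, ψ_mem_quatSub s, psi_sq_neg_one.2 hss, hI⟩
  · intro w₁ h₁ w₂ h₂ hs₁ hs₂ hspan
    obtain ⟨s₁, rfl⟩ := quatSub_eq_range h₁
    obtain ⟨s₂, rfl⟩ := quatSub_eq_range h₂
    exact congrArg ψ (eq_of_span_eq (psi_sq_neg_one.1 hs₂) hspan)
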